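/- arXiv:math/0610913 — 2 statements merged into one kernel-verified Lean document; each statement's English description precedes it below -/
import Mathlib

section
/- For every odd integer p ≥ 9 and every even integer r ≥ 2 there exists a Laurent polynomial Q_{p,r}(q,t) ∈ ℤ[q^{±1}, t^{±1}] with nonnegative coefficients such that Kh_{p,r}(q,t) = q·(1 + q²) + (1 + t q⁴) · Q_{p,r}(q,t). -/
open Finset

/-- Laurent polynomials in two variables `t, q` over `ℤ`:
the index `(i, j)` records the monomial `t^i q^j`. -/
abbrev LP := AddMonoidAlgebra ℤ (ℤ × ℤ)

/-- The monomial `c · t^i q^j`. -/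
noncomputable def mono (i j c : ℤ) : LP := AddMonoidAlgebra.single (i, j) c

/-- The Khovanov Poincaré polynomial `Kh_p(q,t)` of `P(p, -(p-2), 0)` (formula (000)). -/
noncomputable def Kh (p : ℤ) : LP :=
  mono (2 - p) (5 - 2*p) 1 + mono (3 - p) (9 - 2*p) 1 + mono (4 - p) (9 - 2*p) 2
    + mono (5 - p) (11 - 2*p) 1
  + ∑ n ∈ (Finset.Icc (7 - p) (-2)).filter (fun n => Even n),
      (mono (n - 2) (2*n - 1) ((p + n - 5)/2 + 1) + mono (n - 1) (2*n - 1) ((p + n - 5)/2 + 2)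
        + mono (n - 1) (2*n + 1) ((p + n - 5)/2) + mono n (2*n + 1) ((p + n - 5)/2 + 1))
  + (mono (-2) (-1) ((p - 9)/2 + 3) + mono (-1) (-1) ((p - 9)/2 + 3)
      + mono (-1) 1 ((p - 9)/2 + 2) + mono 0 1 ((p - 9)/2 + 4))
  + (mono 0 3 ((p - 9)/2 + 4) + mono 1 3 ((p - 9)/2 + 3)
      + mono 1 5 ((p - 9)/2 + 3) + mono 2 5 ((p - 9)/2 + 4))
  + ∑ m ∈ (Finset.Icc 2 (p - 3)).filter (fun m => Even m),
      (mono m (2*m + 3) ((p - m - 3)/2 + 1) + mono (m + 1) (2*m + 3) ((p - m - 3)/2)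
        + mono (m + 1) (2*m + 5) ((p - m - 3)/2 + 2) + mono (m + 2) (2*m + 5) ((p - m - 3)/2 + 1))
  + mono p (2*p + 3) 1

/-- The Khovanov Poincaré polynomial `Torus_p(q,t)` of the torus knot `T(2,p)`. -/
noncomputable def Torus (p : ℤ) : LP :=
  mono 0 (p - 2) 1 + mono 0 p 1
    + ∑ k ∈ Finset.Icc 1 ((p - 1)/2),
        (mono (2*k) (p + 4*k - 2) 1 + mono (2*k + 1) (p + 4*k + 2) 1)

/-- The Khovanov Poincaré polynomial `Kh_{p,r}(q,t)` of `P(p, -(p-2), -r)` (formula (002)). -/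
noncomputable def KhR (p r : ℤ) : LP :=
  mono r (2*r) 1 * Kh p + mono 0 1 1 + mono 0 3 1 + mono 1 3 1
    + ∑ k ∈ Finset.Icc 1 (r/2 - 1),
        (mono (2*k) (4*k + 1) 1 + mono (2*k) (4*k + 3) 1
          + mono (2*k + 1) (4*k + 3) 1 + mono (2*k + 1) (4*k + 5) 1)
    + mono (r + 1) (2*r + 5) 1

/-- Evaluation at `q = 1, t = 1`: the sum of all coefficients. -/
noncomputable def evalOneOne (f : LP) : ℤ := f.coeff.sum fun _ c => c

/-- Evaluation at `q = 1, t = -1`. -/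
noncomputable def evalOneNegOne (f : LP) : ℤ := f.coeff.sum fun ij c => c * (ij.1.negOnePow : ℤ)

/-- Substitution `t = -1`, yielding a Laurent polynomial in `q`. -/
noncomputable def evalTNegOne (f : LP) : LaurentPolynomial ℤ :=
  f.coeff.sum fun ij c => LaurentPolynomial.C (c * (ij.1.negOnePow : ℤ)) * LaurentPolynomial.T ij.2

/-- Substitution `q ↦ q⁻¹, t = -1`, yielding a Laurent polynomial in `q`. -/
noncomputable def evalQInvTNegOne (f : LP) : LaurentPolynomial ℤ :=
  f.coeff.sum fun ij c => LaurentPolynomial.C (c * (ij.1.negOnePow : ℤ)) * LaurentPolynomial.T (-ij.2)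

/-- Substitution `(q, t) ↦ (q⁻¹, t⁻¹)` on two-variable Laurent polynomials. -/
noncomputable def inv2 (f : LP) : LP := AddMonoidAlgebra.ofCoeff (Finsupp.mapDomain (fun ij => -ij) f.coeff)

-- AUX SECTION (to be inserted before stmt_14)

lemma mono_congr {i j c i' j' c' : ℤ} (h1 : i = i') (h2 : j = j') (h3 : c = c') :
    mono i j c = mono i' j' c' := by subst h1; subst h2; subst h3; rfl

lemma add_congr {M : Type*} [Add M] {a a' b b' : M} (h : a = a') (h2 : b = b') :
    a + b = a' + b' := by rw [h, h2]

lemma add4_congr {M : Type*} [Add M] {a a' b b' c c' d d' : M}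
    (h1 : a = a') (h2 : b = b') (h3 : c = c') (h4 : d = d') :
    a + b + c + d = a' + b' + c' + d' := by rw [h1, h2, h3, h4]

lemma mono_mul (a b c i j d : ℤ) : mono a b c * mono i j d = mono (a+i) (b+j) (c*d) := by
  unfold mono
  rw [AddMonoidAlgebra.single_mul_single]
  rfl

lemma mono_add (i j c d : ℤ) : mono i j (c + d) = mono i j c + mono i j d :=
  AddMonoidAlgebra.single_add _ _ _

lemma mono_zero (i j : ℤ) : mono i j 0 = 0 := AddMonoidAlgebra.single_zero _

lemma peel_top {M : Type*} [AddCommMonoid M] {a b : ℤ} (h : a ≤ b + 1) (f : ℤ → M) :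
    ∑ k ∈ Finset.Icc a (b+1), f k = (∑ k ∈ Finset.Icc a b, f k) + f (b+1) := by
  have he : Finset.Icc a (b+1) = insert (b+1) (Finset.Icc a b) := by
    ext x; simp only [Finset.mem_Icc, Finset.mem_insert]; omega
  rw [he, Finset.sum_insert (by simp only [Finset.mem_Icc]; omega), add_comm]

lemma peel_bot {M : Type*} [AddCommMonoid M] {a b : ℤ} (h : a ≤ b) (f : ℤ → M) :
    ∑ k ∈ Finset.Icc a b, f k = f a + ∑ k ∈ Finset.Icc (a+1) b, f k := by
  have he : Finset.Icc a b = insert a (Finset.Icc (a+1) b) := by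
    ext x; simp only [Finset.mem_Icc, Finset.mem_insert]; omega
  rw [he, Finset.sum_insert (by simp only [Finset.mem_Icc]; omega)]

lemma shift1 {M : Type*} [AddCommMonoid M] (b : ℤ) (f : ℤ → M) :
    ∑ k ∈ Finset.Icc 1 (b+1), f k = ∑ k ∈ Finset.Icc 0 b, f (k+1) := by
  refine Finset.sum_nbij' (fun k => k - 1) (fun k => k + 1) ?_ ?_ ?_ ?_ ?_
  · intro x hx; simp only [Finset.mem_Icc] at hx ⊢; omega
  · intro x hx; simp only [Finset.mem_Icc] at hx ⊢; omega
  · intro x _; omega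
  · intro x _; omega
  · intro x hx; congr 1; omega

/-- The quotient polynomial for `Kh (2s+9)`. -/
noncomputable def Qp (s : ℤ) : LP :=
  (∑ k ∈ Finset.Icc (0:ℤ) (s+2), mono (-3-2*k) (-5-4*k) (s+3-k))
  + (∑ k ∈ Finset.Icc (0:ℤ) (s+1), mono (-2-2*k) (-3-4*k) (s+2-k))
  + mono (-1) (-1) (s+3) + mono 0 1 (s+3) + mono 1 3 (s+3)
  + (∑ k ∈ Finset.Icc (0:ℤ) (s+3), mono (2+2*k) (5+4*k) (s+4-k))
  + (∑ k ∈ Finset.Icc (0:ℤ) (s+1), mono (3+2*k) (7+4*k) (s+2-k))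

/-- The quotient polynomial for the tail of `KhR`. -/
noncomputable def Qmid (w : ℤ) : LP :=
  (∑ k ∈ Finset.Icc (0:ℤ) (w-1), mono (2*k+1) (4*k+3) 1)
  + (∑ k ∈ Finset.Icc (1:ℤ) (w-1), mono (2*k) (4*k+1) 1)
  + mono (2*w) (4*w+1) 1

lemma hsum1 (s : ℤ) (hs : 0 ≤ s) :
    (∑ n ∈ (Finset.Icc (7 - (2*s+9)) (-2)).filter (fun n => Even n),
      (mono (n - 2) (2*n - 1) ((2*s+9 + n - 5)/2 + 1) + mono (n - 1) (2*n - 1) ((2*s+9 + n - 5)/2 + 2)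
        + mono (n - 1) (2*n + 1) ((2*s+9 + n - 5)/2) + mono n (2*n + 1) ((2*s+9 + n - 5)/2 + 1)))
    = (∑ k ∈ Finset.Icc (0:ℤ) s, mono (-4-2*k) (-5-4*k) (s+2-k))
      + (∑ k ∈ Finset.Icc (0:ℤ) s, mono (-3-2*k) (-5-4*k) (s+3-k))
      + (∑ k ∈ Finset.Icc (0:ℤ) s, mono (-3-2*k) (-3-4*k) (s+1-k))
      + (∑ k ∈ Finset.Icc (0:ℤ) s, mono (-2-2*k) (-3-4*k) (s+2-k)) := by
  rw [← Finset.sum_add_distrib, ← Finset.sum_add_distrib, ← Finset.sum_add_distrib]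
  refine Finset.sum_nbij' (fun n => (-2 - n)/2) (fun k => -2 - 2*k) ?_ ?_ ?_ ?_ ?_
  · intro n hn; simp only [Finset.mem_filter, Finset.mem_Icc, Int.even_iff] at hn ⊢; omega
  · intro k hk; simp only [Finset.mem_filter, Finset.mem_Icc, Int.even_iff] at hk ⊢; omega
  · intro n hn; simp only [Finset.mem_filter, Finset.mem_Icc, Int.even_iff] at hn; omega
  · intro k hk; simp only [Finset.mem_Icc] at hk; omega
  · intro n hn; simp only [Finset.mem_filter, Finset.mem_Icc, Int.even_iff] at hn
    exact add4_congr (mono_congr (by omega) (by omega) (by omega))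
      (mono_congr (by omega) (by omega) (by omega))
      (mono_congr (by omega) (by omega) (by omega))
      (mono_congr (by omega) (by omega) (by omega))

lemma hsum2 (s : ℤ) (hs : 0 ≤ s) :
    (∑ m ∈ (Finset.Icc 2 (2*s+9 - 3)).filter (fun m => Even m),
      (mono m (2*m + 3) ((2*s+9 - m - 3)/2 + 1) + mono (m + 1) (2*m + 3) ((2*s+9 - m - 3)/2)
        + mono (m + 1) (2*m + 5) ((2*s+9 - m - 3)/2 + 2) + mono (m + 2) (2*m + 5) ((2*s+9 - m - 3)/2 + 1)))
    = (∑ k ∈ Finset.Icc (0:ℤ) (s+2), mono (2+2*k) (7+4*k) (s+3-k))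
      + (∑ k ∈ Finset.Icc (0:ℤ) (s+2), mono (3+2*k) (7+4*k) (s+2-k))
      + (∑ k ∈ Finset.Icc (0:ℤ) (s+2), mono (3+2*k) (9+4*k) (s+4-k))
      + (∑ k ∈ Finset.Icc (0:ℤ) (s+2), mono (4+2*k) (9+4*k) (s+3-k)) := by
  rw [← Finset.sum_add_distrib, ← Finset.sum_add_distrib, ← Finset.sum_add_distrib]
  refine Finset.sum_nbij' (fun m => (m - 2)/2) (fun k => 2 + 2*k) ?_ ?_ ?_ ?_ ?_
  · intro n hn; simp only [Finset.mem_filter, Finset.mem_Icc, Int.even_iff] at hn ⊢; omega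
  · intro k hk; simp only [Finset.mem_filter, Finset.mem_Icc, Int.even_iff] at hk ⊢; omega
  · intro n hn; simp only [Finset.mem_filter, Finset.mem_Icc, Int.even_iff] at hn; omega
  · intro k hk; simp only [Finset.mem_Icc] at hk; omega
  · intro n hn; simp only [Finset.mem_filter, Finset.mem_Icc, Int.even_iff] at hn
    exact add4_congr (mono_congr (by omega) (by omega) (by omega))
      (mono_congr (by omega) (by omega) (by omega))
      (mono_congr (by omega) (by omega) (by omega))
      (mono_congr (by omega) (by omega) (by omega))

lemma mul_sum_mono (a b c : ℤ) (T : Finset ℤ) (f g h f' g' h' : ℤ → ℤ)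
    (hf : ∀ k ∈ T, f' k = a + f k) (hg : ∀ k ∈ T, g' k = b + g k)
    (hh : ∀ k ∈ T, h' k = c * h k) :
    mono a b c * (∑ k ∈ T, mono (f k) (g k) (h k)) = ∑ k ∈ T, mono (f' k) (g' k) (h' k) := by
  rw [Finset.mul_sum]
  exact Finset.sum_congr rfl fun k hk => by
    rw [mono_mul]; exact mono_congr (hf k hk).symm (hg k hk).symm (hh k hk).symm

lemma KhKey (s : ℤ) (hs : 0 ≤ s) :
    Kh (2*s+9) = mono 0 1 1 + mono 0 3 1 + (1 + mono 1 4 1) * Qp s := by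
  have hshift : mono 1 4 1 * Qp s
      = (∑ k ∈ Finset.Icc (0:ℤ) (s+2), mono (-2-2*k) (-1-4*k) (s+3-k))
        + (∑ k ∈ Finset.Icc (0:ℤ) (s+1), mono (-1-2*k) (1-4*k) (s+2-k))
        + mono 0 3 (s+3) + mono 1 5 (s+3) + mono 2 7 (s+3)
        + (∑ k ∈ Finset.Icc (0:ℤ) (s+3), mono (3+2*k) (9+4*k) (s+4-k))
        + (∑ k ∈ Finset.Icc (0:ℤ) (s+1), mono (4+2*k) (11+4*k) (s+2-k)) := by
    unfold Qp
    rw [mul_add, mul_add, mul_add, mul_add, mul_add, mul_add]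
    exact add_congr (add_congr (add_congr (add_congr (add_congr (add_congr
      (mul_sum_mono _ _ _ _ _ _ _ _ _ _ (fun k _ => by ring) (fun k _ => by ring) (fun k _ => by ring))
      (mul_sum_mono _ _ _ _ _ _ _ _ _ _ (fun k _ => by ring) (fun k _ => by ring) (fun k _ => by ring)))
      (by rw [mono_mul]; exact mono_congr (by ring) (by ring) (by ring)))
      (by rw [mono_mul]; exact mono_congr (by ring) (by ring) (by ring)))
      (by rw [mono_mul]; exact mono_congr (by ring) (by ring) (by ring)))
      (mul_sum_mono _ _ _ _ _ _ _ _ _ _ (fun k _ => by ring) (fun k _ => by ring) (fun k _ => by ring)))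
      (mul_sum_mono _ _ _ _ _ _ _ _ _ _ (fun k _ => by ring) (fun k _ => by ring) (fun k _ => by ring))
  -- peel lemmas for the five Qp sums and the five shifted sums
  have hN1 : (∑ k ∈ Finset.Icc (0:ℤ) (s+2), mono (-3-2*k) (-5-4*k) (s+3-k))
      = (∑ k ∈ Finset.Icc (0:ℤ) s, mono (-3-2*k) (-5-4*k) (s+3-k))
        + mono (-2*s-5) (-4*s-9) 2 + mono (-2*s-7) (-4*s-13) 1 := by
    rw [show (s+2:ℤ) = s+1+1 from by ring]
    rw [peel_top (by omega), peel_top (by omega)]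
    exact add_congr (add_congr rfl (mono_congr (by ring) (by ring) (by ring)))
      (mono_congr (by ring) (by ring) (by ring))
  have hN2 : (∑ k ∈ Finset.Icc (0:ℤ) (s+1), mono (-2-2*k) (-3-4*k) (s+2-k))
      = (∑ k ∈ Finset.Icc (0:ℤ) s, mono (-2-2*k) (-3-4*k) (s+2-k))
        + mono (-2*s-4) (-4*s-7) 1 := by
    rw [peel_top (by omega)]
    exact add_congr rfl (mono_congr (by ring) (by ring) (by ring))
  have hN1' : (∑ k ∈ Finset.Icc (0:ℤ) (s+2), mono (-2-2*k) (-1-4*k) (s+3-k))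
      = mono (-2) (-1) (s+3) + (∑ k ∈ Finset.Icc (0:ℤ) s, mono (-4-2*k) (-5-4*k) (s+2-k))
        + mono (-2*s-6) (-4*s-9) 1 := by
    rw [show (s+2:ℤ) = s+1+1 from by ring]
    rw [peel_top (by omega), peel_bot (by omega), show ((0:ℤ)+1) = 1 from by norm_num, shift1]
    exact add_congr (add_congr (mono_congr (by ring) (by ring) (by ring))
      (Finset.sum_congr rfl fun k _ => mono_congr (by ring) (by ring) (by ring)))
      (mono_congr (by ring) (by ring) (by ring))
  have hN2' : (∑ k ∈ Finset.Icc (0:ℤ) (s+1), mono (-1-2*k) (1-4*k) (s+2-k))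
      = mono (-1) 1 (s+2) + (∑ k ∈ Finset.Icc (0:ℤ) s, mono (-3-2*k) (-3-4*k) (s+1-k)) := by
    rw [peel_bot (by omega), show ((0:ℤ)+1) = 1 from by norm_num, shift1]
    exact add_congr (mono_congr (by ring) (by ring) (by ring))
      (Finset.sum_congr rfl fun k _ => mono_congr (by ring) (by ring) (by ring))
  have hP1 : (∑ k ∈ Finset.Icc (0:ℤ) (s+3), mono (2+2*k) (5+4*k) (s+4-k))
      = mono 2 5 (s+4) + (∑ k ∈ Finset.Icc (0:ℤ) (s+2), mono (4+2*k) (9+4*k) (s+3-k)) := by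
    rw [show (s+3:ℤ) = s+2+1 from by ring]
    rw [peel_bot (by omega), show ((0:ℤ)+1) = 1 from by norm_num, shift1]
    exact add_congr (mono_congr (by ring) (by ring) (by ring))
      (Finset.sum_congr rfl fun k _ => mono_congr (by ring) (by ring) (by ring))
  have hP1' : (∑ k ∈ Finset.Icc (0:ℤ) (s+3), mono (3+2*k) (9+4*k) (s+4-k))
      = (∑ k ∈ Finset.Icc (0:ℤ) (s+2), mono (3+2*k) (9+4*k) (s+4-k))
        + mono (2*s+9) (4*s+21) 1 := by
    rw [show (s+3:ℤ) = s+2+1 from by ring, peel_top (by omega)]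
    exact add_congr rfl (mono_congr (by ring) (by ring) (by ring))
  -- Kh-side sums
  have hM1 : (∑ k ∈ Finset.Icc (0:ℤ) (s+2), mono (2+2*k) (7+4*k) (s+3-k))
      = mono 2 7 (s+3) + (∑ k ∈ Finset.Icc (0:ℤ) (s+1), mono (4+2*k) (11+4*k) (s+2-k)) := by
    rw [show (s+2:ℤ) = s+1+1 from by ring]
    rw [peel_bot (by omega), show ((0:ℤ)+1) = 1 from by norm_num, shift1]
    exact add_congr (mono_congr (by ring) (by ring) (by ring))
      (Finset.sum_congr rfl fun k _ => mono_congr (by ring) (by ring) (by ring))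
  have hM2 : (∑ k ∈ Finset.Icc (0:ℤ) (s+2), mono (3+2*k) (7+4*k) (s+2-k))
      = (∑ k ∈ Finset.Icc (0:ℤ) (s+1), mono (3+2*k) (7+4*k) (s+2-k)) := by
    rw [show (s+2:ℤ) = s+1+1 from by ring] -- NOTE: also rewrites coefficients on both sides
    rw [peel_top (by omega)]
    rw [add_eq_left, sub_self]
    exact mono_zero _ _
  -- now the main computation
  unfold Kh
  rw [hsum1 s hs, hsum2 s hs]
  rw [add_mul, one_mul, hshift]
  unfold Qp
  rw [hN1, hN2, hN1', hN2', hP1, hP1', hM1, hM2]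
  -- merge the pawn monos with coefficient splits, and normalize all leftover monos
  rw [show mono (2 - (2*s+9)) (5 - 2*(2*s+9)) 1 = mono (-2*s-7) (-4*s-13) 1 from
      mono_congr (by ring) (by ring) rfl,
    show mono (3 - (2*s+9)) (9 - 2*(2*s+9)) 1 = mono (-2*s-6) (-4*s-9) 1 from
      mono_congr (by ring) (by ring) rfl,
    show mono (4 - (2*s+9)) (9 - 2*(2*s+9)) 2 = mono (-2*s-5) (-4*s-9) 2 from
      mono_congr (by ring) (by ring) rfl,
    show mono (5 - (2*s+9)) (11 - 2*(2*s+9)) 1 = mono (-2*s-4) (-4*s-7) 1 from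
      mono_congr (by ring) (by ring) rfl,
    show mono (-2) (-1) ((2*s+9 - 9)/2 + 3) = mono (-2) (-1) (s+3) from
      mono_congr rfl rfl (by omega),
    show mono (-1) (-1) ((2*s+9 - 9)/2 + 3) = mono (-1) (-1) (s+3) from
      mono_congr rfl rfl (by omega),
    show mono (-1) 1 ((2*s+9 - 9)/2 + 2) = mono (-1) 1 (s+2) from
      mono_congr rfl rfl (by omega),
    show mono 0 1 ((2*s+9 - 9)/2 + 4) = mono 0 1 (s+3) + mono 0 1 1 from by
      rw [← mono_add]; exact mono_congr rfl rfl (by omega),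
    show mono 0 3 ((2*s+9 - 9)/2 + 4) = mono 0 3 (s+3) + mono 0 3 1 from by
      rw [← mono_add]; exact mono_congr rfl rfl (by omega),
    show mono 1 3 ((2*s+9 - 9)/2 + 3) = mono 1 3 (s+3) from
      mono_congr rfl rfl (by omega),
    show mono 1 5 ((2*s+9 - 9)/2 + 3) = mono 1 5 (s+3) from
      mono_congr rfl rfl (by omega),
    show mono 2 5 ((2*s+9 - 9)/2 + 4) = mono 2 5 (s+4) from
      mono_congr rfl rfl (by omega),
    show mono (2*s+9) (2*(2*s+9) + 3) 1 = mono (2*s+9) (4*s+21) 1 from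
      mono_congr rfl (by ring) rfl]
  abel

lemma hmid (w : ℤ) (hw : 1 ≤ w) :
    (1 + mono 1 4 1) * Qmid w
      = mono 1 3 1 + (∑ k ∈ Finset.Icc (1:ℤ) (w-1), mono (2*k+1) (4*k+3) 1)
        + (∑ k ∈ Finset.Icc (1:ℤ) (w-1), mono (2*k) (4*k+1) 1)
        + mono (2*w) (4*w+1) 1
        + (∑ k ∈ Finset.Icc (1:ℤ) (w-1), mono (2*k) (4*k+3) 1)
        + mono (2*w) (4*w+3) 1
        + (∑ k ∈ Finset.Icc (1:ℤ) (w-1), mono (2*k+1) (4*k+5) 1)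
        + mono (2*w+1) (4*w+5) 1 := by
  have hA : (∑ k ∈ Finset.Icc (0:ℤ) (w-1), mono (2*k+1) (4*k+3) 1)
      = mono 1 3 1 + (∑ k ∈ Finset.Icc (1:ℤ) (w-1), mono (2*k+1) (4*k+3) 1) := by
    rw [peel_bot (by omega), show ((0:ℤ)+1) = 1 from by norm_num]
    exact add_congr (mono_congr (by ring) (by ring) rfl) rfl
  have hA' : mono 1 4 1 * (∑ k ∈ Finset.Icc (0:ℤ) (w-1), mono (2*k+1) (4*k+3) 1)
      = (∑ k ∈ Finset.Icc (1:ℤ) (w-1), mono (2*k) (4*k+3) 1) + mono (2*w) (4*w+3) 1 := by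
    have e1 : mono 1 4 1 * (∑ k ∈ Finset.Icc (0:ℤ) (w-1), mono (2*k+1) (4*k+3) 1)
        = ∑ k ∈ Finset.Icc (0:ℤ) (w-1), mono (2*(k+1)) (4*(k+1)+3) 1 :=
      mul_sum_mono _ _ _ _ _ _ _ _ _ _ (fun k _ => by ring) (fun k _ => by ring)
        (fun k _ => by ring)
    have e2 : (∑ k ∈ Finset.Icc (0:ℤ) (w-1), mono (2*(k+1)) (4*(k+1)+3) 1)
        = ∑ k ∈ Finset.Icc (1:ℤ) (w-1+1), mono (2*k) (4*k+3) 1 :=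
      (shift1 (w-1) (fun k => mono (2*k) (4*k+3) 1)).symm
    have e3 : (∑ k ∈ Finset.Icc (1:ℤ) (w-1+1), mono (2*k) (4*k+3) 1)
        = (∑ k ∈ Finset.Icc (1:ℤ) (w-1), mono (2*k) (4*k+3) 1)
          + mono (2*(w-1+1)) (4*(w-1+1)+3) 1 := peel_top (by omega) _
    rw [e1, e2, e3]
    exact add_congr rfl (mono_congr (by ring) (by ring) rfl)
  have hB' : mono 1 4 1 * (∑ k ∈ Finset.Icc (1:ℤ) (w-1), mono (2*k) (4*k+1) 1)
      = ∑ k ∈ Finset.Icc (1:ℤ) (w-1), mono (2*k+1) (4*k+5) 1 :=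
    mul_sum_mono 1 4 1 _ _ _ _ _ _ _ (fun k _ => by ring) (fun k _ => by ring) (fun k _ => by ring)
  unfold Qmid
  rw [add_mul, one_mul, mul_add, mul_add, hA', hB',
    show mono 1 4 1 * mono (2*w) (4*w+1) 1 = mono (2*w+1) (4*w+5) 1 from by
      rw [mono_mul]; exact mono_congr (by ring) (by ring) (by ring), hA]
  abel

lemma nonneg_mono {c : ℤ} (h : 0 ≤ c) (i j : ℤ) (x : ℤ × ℤ) : 0 ≤ (mono i j c).coeff x := by
  unfold mono
  rw [AddMonoidAlgebra.coeff_single, Finsupp.single_apply]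
  split <;> simp [h]

lemma nonneg_add {f g : LP} (hf : ∀ x, 0 ≤ f.coeff x) (hg : ∀ x, 0 ≤ g.coeff x) (x : ℤ × ℤ) :
    0 ≤ (f + g).coeff x := by
  rw [AddMonoidAlgebra.coeff_add, Finsupp.add_apply]; exact add_nonneg (hf x) (hg x)

lemma nonneg_sum {T : Finset ℤ} {f : ℤ → LP} (hf : ∀ k ∈ T, ∀ x, 0 ≤ (f k).coeff x) (x : ℤ × ℤ) :
    0 ≤ (∑ k ∈ T, f k).coeff x := by
  rw [AddMonoidAlgebra.coeff_sum, Finset.sum_apply']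
  exact Finset.sum_nonneg fun k hk => hf k hk x


/-- For odd `p ≥ 9` and even `r ≥ 2` there is `Q_{p,r} ∈ ℤ[q^{±1}, t^{±1}]` with nonnegative
coefficients such that `Kh_{p,r}(q,t) = q·(1 + q²) + (1 + t q⁴) · Q_{p,r}(q,t)`. -/
theorem stmt_14 (p r : ℤ) (hp : Odd p) (hp9 : 9 ≤ p) (hr : Even r) (hr2 : 2 ≤ r) :
    ∃ Q : LP, (∀ ij : ℤ × ℤ, 0 ≤ Q.coeff ij) ∧
      KhR p r = mono 0 1 1 + mono 0 3 1 + (1 + mono 1 4 1) * Q := by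
  obtain ⟨a, ha⟩ := hp
  obtain ⟨b, hb⟩ := hr
  obtain ⟨s, hs, rfl⟩ : ∃ s, 0 ≤ s ∧ p = 2*s+9 := ⟨(p-9)/2, by omega, by omega⟩
  obtain ⟨w, hw, rfl⟩ : ∃ w, 1 ≤ w ∧ r = 2*w := ⟨r/2, by omega, by omega⟩
  have hexp : mono (2*w) (4*w) 1 * Qp s
      = (∑ k ∈ Finset.Icc (0:ℤ) (s+2), mono (2*w-3-2*k) (4*w-5-4*k) (s+3-k))
        + (∑ k ∈ Finset.Icc (0:ℤ) (s+1), mono (2*w-2-2*k) (4*w-3-4*k) (s+2-k))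
        + mono (2*w-1) (4*w-1) (s+3) + mono (2*w) (4*w+1) (s+3) + mono (2*w+1) (4*w+3) (s+3)
        + (∑ k ∈ Finset.Icc (0:ℤ) (s+3), mono (2*w+2+2*k) (4*w+5+4*k) (s+4-k))
        + (∑ k ∈ Finset.Icc (0:ℤ) (s+1), mono (2*w+3+2*k) (4*w+7+4*k) (s+2-k)) := by
    unfold Qp
    rw [mul_add, mul_add, mul_add, mul_add, mul_add, mul_add]
    exact add_congr (add_congr (add_congr (add_congr (add_congr (add_congr
      (mul_sum_mono _ _ _ _ _ _ _ _ _ _ (fun k _ => by ring) (fun k _ => by ring) (fun k _ => by ring))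
      (mul_sum_mono _ _ _ _ _ _ _ _ _ _ (fun k _ => by ring) (fun k _ => by ring) (fun k _ => by ring)))
      (by rw [mono_mul]; exact mono_congr (by ring) (by ring) (by ring)))
      (by rw [mono_mul]; exact mono_congr (by ring) (by ring) (by ring)))
      (by rw [mono_mul]; exact mono_congr (by ring) (by ring) (by ring)))
      (mul_sum_mono _ _ _ _ _ _ _ _ _ _ (fun k _ => by ring) (fun k _ => by ring) (fun k _ => by ring)))
      (mul_sum_mono _ _ _ _ _ _ _ _ _ _ (fun k _ => by ring) (fun k _ => by ring) (fun k _ => by ring))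
  refine ⟨mono (2*w) (4*w) 1 * Qp s + Qmid w, ?_, ?_⟩
  · intro ij
    rw [hexp]
    unfold Qmid
    repeat' first
      | with_reducible refine nonneg_add (fun x => ?_) (fun x => ?_) _
      | with_reducible refine nonneg_sum (fun k hk x => ?_) _
    all_goals
      first
        | exact nonneg_mono (by omega) _ _ _
        | exact nonneg_mono (by simp only [Finset.mem_Icc] at hk; omega) _ _ _
  · unfold KhR
    rw [show (2*(2*w):ℤ) = 4*w from by ring]
    rw [show (2*w/2 - 1 : ℤ) = w-1 from by omega]
    rw [KhKey s hs]
    rw [mul_add, mul_add,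
      show mono (2*w) (4*w) 1 * mono 0 1 1 = mono (2*w) (4*w+1) 1 from by
        rw [mono_mul]; exact mono_congr (by ring) (by ring) (by ring),
      show mono (2*w) (4*w) 1 * mono 0 3 1 = mono (2*w) (4*w+3) 1 from by
        rw [mono_mul]; exact mono_congr (by ring) (by ring) (by ring),
      mul_left_comm (mono (2*w) (4*w) 1) (1 + mono 1 4 1) (Qp s),
      mul_add (1 + mono 1 4 1) (mono (2*w) (4*w) 1 * Qp s) (Qmid w),
      hmid w hw]
    rw [Finset.sum_add_distrib, Finset.sum_add_distrib, Finset.sum_add_distrib]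
    abel
end

section
/- For every odd integer p ≥ 9, the coefficient of t^p in Kh_p(q,t) equals q^{2p+3}, the coefficient of t^{2-p} equals q^{5-2p}, and for every integer i with 3-p ≤ i ≤ p-1 the coefficient of t^i in Kh_p(q,t) is a nonzero polynomial in q (so the homological width of the rational Khovanov homology of P(p,-(p-2),0) is exactly 2p - 1, spanning homological degrees 2-p through p). -/
open Finset

lemma mono_apply (i j c a b : ℤ) : (mono i j c).coeff (a,b) = if i = a ∧ j = b then c else 0 := by
  simp [mono, AddMonoidAlgebra.coeff_single, Finsupp.single_apply, Prod.ext_iff]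

lemma LP.add_apply (f g : LP) (x : ℤ×ℤ) : (f + g).coeff x = f.coeff x + g.coeff x := by
  rw [AddMonoidAlgebra.coeff_add]; exact Finsupp.add_apply _ _ x

lemma LP.sum_apply (s : Finset ℤ) (f : ℤ → LP) (x : ℤ×ℤ) :
    (∑ n ∈ s, f n).coeff x = ∑ n ∈ s, (f n).coeff x := by
  rw [AddMonoidAlgebra.coeff_sum]; exact Finset.sum_apply' x

lemma Kh_apply (p a b : ℤ) : (Kh p).coeff (a, b) =
    (if 2 - p = a ∧ 5 - 2*p = b then 1 else 0)
  + (if 3 - p = a ∧ 9 - 2*p = b then 1 else 0)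
  + (if 4 - p = a ∧ 9 - 2*p = b then 2 else 0)
  + (if 5 - p = a ∧ 11 - 2*p = b then 1 else 0)
  + ∑ n ∈ (Finset.Icc (7 - p) (-2)).filter (fun n => Even n),
      ((if n - 2 = a ∧ 2*n - 1 = b then (p + n - 5)/2 + 1 else 0)
       + (if n - 1 = a ∧ 2*n - 1 = b then (p + n - 5)/2 + 2 else 0)
       + (if n - 1 = a ∧ 2*n + 1 = b then (p + n - 5)/2 else 0)
       + (if n = a ∧ 2*n + 1 = b then (p + n - 5)/2 + 1 else 0))
  + ((if (-2 : ℤ) = a ∧ (-1 : ℤ) = b then (p - 9)/2 + 3 else 0)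
      + (if (-1 : ℤ) = a ∧ (-1 : ℤ) = b then (p - 9)/2 + 3 else 0)
      + (if (-1 : ℤ) = a ∧ (1 : ℤ) = b then (p - 9)/2 + 2 else 0)
      + (if (0 : ℤ) = a ∧ (1 : ℤ) = b then (p - 9)/2 + 4 else 0))
  + ((if (0 : ℤ) = a ∧ (3 : ℤ) = b then (p - 9)/2 + 4 else 0)
      + (if (1 : ℤ) = a ∧ (3 : ℤ) = b then (p - 9)/2 + 3 else 0)
      + (if (1 : ℤ) = a ∧ (5 : ℤ) = b then (p - 9)/2 + 3 else 0)
      + (if (2 : ℤ) = a ∧ (5 : ℤ) = b then (p - 9)/2 + 4 else 0))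
  + ∑ m ∈ (Finset.Icc 2 (p - 3)).filter (fun m => Even m),
      ((if m = a ∧ 2*m + 3 = b then (p - m - 3)/2 + 1 else 0)
       + (if m + 1 = a ∧ 2*m + 3 = b then (p - m - 3)/2 else 0)
       + (if m + 1 = a ∧ 2*m + 5 = b then (p - m - 3)/2 + 2 else 0)
       + (if m + 2 = a ∧ 2*m + 5 = b then (p - m - 3)/2 + 1 else 0))
  + (if p = a ∧ 2*p + 3 = b then 1 else 0) := by
  simp only [Kh, LP.add_apply, LP.sum_apply, mono_apply]

lemma nsum_zero (p a b : ℤ)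
    (h : ∀ n, 7 - p ≤ n → n ≤ -2 → Even n →
      ¬(n - 2 = a ∧ 2*n - 1 = b) ∧ ¬(n - 1 = a ∧ 2*n - 1 = b) ∧
      ¬(n - 1 = a ∧ 2*n + 1 = b) ∧ ¬(n = a ∧ 2*n + 1 = b)) :
    ∑ n ∈ (Finset.Icc (7 - p) (-2)).filter (fun n => Even n),
      ((if n - 2 = a ∧ 2*n - 1 = b then (p + n - 5)/2 + 1 else 0)
       + (if n - 1 = a ∧ 2*n - 1 = b then (p + n - 5)/2 + 2 else 0)
       + (if n - 1 = a ∧ 2*n + 1 = b then (p + n - 5)/2 else 0)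
       + (if n = a ∧ 2*n + 1 = b then (p + n - 5)/2 + 1 else 0)) = 0 := by
  refine Finset.sum_eq_zero fun n hn => ?_
  simp only [Finset.mem_filter, Finset.mem_Icc] at hn
  obtain ⟨h1, h2, h3, h4⟩ := h n hn.1.1 hn.1.2 hn.2
  rw [if_neg h1, if_neg h2, if_neg h3, if_neg h4]; norm_num

lemma msum_zero (p a b : ℤ)
    (h : ∀ m, 2 ≤ m → m ≤ p - 3 → Even m →
      ¬(m = a ∧ 2*m + 3 = b) ∧ ¬(m + 1 = a ∧ 2*m + 3 = b) ∧
      ¬(m + 1 = a ∧ 2*m + 5 = b) ∧ ¬(m + 2 = a ∧ 2*m + 5 = b)) :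
    ∑ m ∈ (Finset.Icc 2 (p - 3)).filter (fun m => Even m),
      ((if m = a ∧ 2*m + 3 = b then (p - m - 3)/2 + 1 else 0)
       + (if m + 1 = a ∧ 2*m + 3 = b then (p - m - 3)/2 else 0)
       + (if m + 1 = a ∧ 2*m + 5 = b then (p - m - 3)/2 + 2 else 0)
       + (if m + 2 = a ∧ 2*m + 5 = b then (p - m - 3)/2 + 1 else 0)) = 0 := by
  refine Finset.sum_eq_zero fun m hm => ?_
  simp only [Finset.mem_filter, Finset.mem_Icc] at hm
  obtain ⟨h1, h2, h3, h4⟩ := h m hm.1.1 hm.1.2 hm.2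
  rw [if_neg h1, if_neg h2, if_neg h3, if_neg h4]; norm_num

lemma nsum_single (p a b n₀ : ℤ) (hlo : 7 - p ≤ n₀) (hhi : n₀ ≤ -2) (hev : Even n₀)
    (h : ∀ n, 7 - p ≤ n → n ≤ -2 → Even n → n ≠ n₀ →
      ¬(n - 2 = a ∧ 2*n - 1 = b) ∧ ¬(n - 1 = a ∧ 2*n - 1 = b) ∧
      ¬(n - 1 = a ∧ 2*n + 1 = b) ∧ ¬(n = a ∧ 2*n + 1 = b)) :
    ∑ n ∈ (Finset.Icc (7 - p) (-2)).filter (fun n => Even n),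
      ((if n - 2 = a ∧ 2*n - 1 = b then (p + n - 5)/2 + 1 else 0)
       + (if n - 1 = a ∧ 2*n - 1 = b then (p + n - 5)/2 + 2 else 0)
       + (if n - 1 = a ∧ 2*n + 1 = b then (p + n - 5)/2 else 0)
       + (if n = a ∧ 2*n + 1 = b then (p + n - 5)/2 + 1 else 0))
    = ((if n₀ - 2 = a ∧ 2*n₀ - 1 = b then (p + n₀ - 5)/2 + 1 else 0)
       + (if n₀ - 1 = a ∧ 2*n₀ - 1 = b then (p + n₀ - 5)/2 + 2 else 0)
       + (if n₀ - 1 = a ∧ 2*n₀ + 1 = b then (p + n₀ - 5)/2 else 0)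
       + (if n₀ = a ∧ 2*n₀ + 1 = b then (p + n₀ - 5)/2 + 1 else 0)) := by
  refine Finset.sum_eq_single_of_mem n₀
    (Finset.mem_filter.mpr ⟨Finset.mem_Icc.mpr ⟨hlo, hhi⟩, hev⟩) fun n hn hne => ?_
  simp only [Finset.mem_filter, Finset.mem_Icc] at hn
  obtain ⟨h1, h2, h3, h4⟩ := h n hn.1.1 hn.1.2 hn.2 hne
  rw [if_neg h1, if_neg h2, if_neg h3, if_neg h4]; norm_num

lemma msum_single (p a b m₀ : ℤ) (hlo : 2 ≤ m₀) (hhi : m₀ ≤ p - 3) (hev : Even m₀)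
    (h : ∀ m, 2 ≤ m → m ≤ p - 3 → Even m → m ≠ m₀ →
      ¬(m = a ∧ 2*m + 3 = b) ∧ ¬(m + 1 = a ∧ 2*m + 3 = b) ∧
      ¬(m + 1 = a ∧ 2*m + 5 = b) ∧ ¬(m + 2 = a ∧ 2*m + 5 = b)) :
    ∑ m ∈ (Finset.Icc 2 (p - 3)).filter (fun m => Even m),
      ((if m = a ∧ 2*m + 3 = b then (p - m - 3)/2 + 1 else 0)
       + (if m + 1 = a ∧ 2*m + 3 = b then (p - m - 3)/2 else 0)
       + (if m + 1 = a ∧ 2*m + 5 = b then (p - m - 3)/2 + 2 else 0)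
       + (if m + 2 = a ∧ 2*m + 5 = b then (p - m - 3)/2 + 1 else 0))
    = ((if m₀ = a ∧ 2*m₀ + 3 = b then (p - m₀ - 3)/2 + 1 else 0)
       + (if m₀ + 1 = a ∧ 2*m₀ + 3 = b then (p - m₀ - 3)/2 else 0)
       + (if m₀ + 1 = a ∧ 2*m₀ + 5 = b then (p - m₀ - 3)/2 + 2 else 0)
       + (if m₀ + 2 = a ∧ 2*m₀ + 5 = b then (p - m₀ - 3)/2 + 1 else 0)) := by
  refine Finset.sum_eq_single_of_mem m₀
    (Finset.mem_filter.mpr ⟨Finset.mem_Icc.mpr ⟨hlo, hhi⟩, hev⟩) fun m hm hne => ?_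
  simp only [Finset.mem_filter, Finset.mem_Icc] at hm
  obtain ⟨h1, h2, h3, h4⟩ := h m hm.1.1 hm.1.2 hm.2 hne
  rw [if_neg h1, if_neg h2, if_neg h3, if_neg h4]; norm_num

/-- For odd `p ≥ 9`, the coefficient of `t^p` in `Kh_p` is exactly `q^{2p+3}`, the
coefficient of `t^{2-p}` is exactly `q^{5-2p}`, and for each `i` with `3-p ≤ i ≤ p-1`
the coefficient of `t^i` is a nonzero polynomial in `q`: the homological width is
exactly `2p - 1`. -/
theorem stmt_17 (p : ℤ) (hp : Odd p) (hp9 : 9 ≤ p) :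
    (∀ j : ℤ, (Kh p).coeff (p, j) = if j = 2*p + 3 then 1 else 0) ∧
    (∀ j : ℤ, (Kh p).coeff (2 - p, j) = if j = 5 - 2*p then 1 else 0) ∧
    (∀ i : ℤ, 3 - p ≤ i → i ≤ p - 1 → ∃ j : ℤ, (Kh p).coeff (i, j) ≠ 0) := by
  obtain ⟨c, hc⟩ := hp
  refine ⟨?_, ?_, ?_⟩
  · intro j
    rw [Kh_apply,
      nsum_zero p p j (fun n h1 h2 h3 => by
        obtain ⟨k, hk⟩ := h3; refine ⟨by omega, by omega, by omega, by omega⟩),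
      msum_zero p p j (fun m h1 h2 h3 => by
        obtain ⟨k, hk⟩ := h3; refine ⟨by omega, by omega, by omega, by omega⟩)]
    rcases eq_or_ne j (2*p + 3) with hj | hj
    · iterate 12 rw [if_neg (by omega)]
      rw [if_pos (by omega)]
      split_ifs <;> omega
    · iterate 13 rw [if_neg (by omega)]
      split_ifs <;> omega
  · intro j
    rw [Kh_apply,
      nsum_zero p (2 - p) j (fun n h1 h2 h3 => by
        obtain ⟨k, hk⟩ := h3; refine ⟨by omega, by omega, by omega, by omega⟩),
      msum_zero p (2 - p) j (fun m h1 h2 h3 => by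
        obtain ⟨k, hk⟩ := h3; refine ⟨by omega, by omega, by omega, by omega⟩)]
    rcases eq_or_ne j (5 - 2*p) with hj | hj
    · rw [if_pos (by omega)]
      iterate 12 rw [if_neg (by omega)]
      split_ifs <;> omega
    · iterate 13 rw [if_neg (by omega)]
      split_ifs <;> omega
  · intro i hlo hhi
    rcases Int.even_or_odd i with he | ho
    · obtain ⟨d, hd⟩ := he
      by_cases h1 : i = 3 - p
      · refine ⟨9 - 2*p, ?_⟩
        rw [Kh_apply,
          nsum_zero p i (9 - 2*p) (fun n hn1 hn2 hn3 => by
            obtain ⟨k, hk⟩ := hn3; refine ⟨by omega, by omega, by omega, by omega⟩),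
          msum_zero p i (9 - 2*p) (fun m hn1 hn2 hn3 => by
            obtain ⟨k, hk⟩ := hn3; refine ⟨by omega, by omega, by omega, by omega⟩)]
        rw [if_neg (by omega), if_pos (by omega)]
        iterate 11 rw [if_neg (by omega)]
        omega
      by_cases h2 : i ≤ -4
      · have h5 : 5 - p ≤ i := by omega
        refine ⟨2*i + 3, ?_⟩
        rw [Kh_apply,
          nsum_single p i (2*i + 3) (i + 2) (by omega) (by omega) ⟨d + 1, by omega⟩
            (fun n hn1 hn2 hn3 hne => by
              obtain ⟨k, hk⟩ := hn3; refine ⟨by omega, by omega, by omega, by omega⟩),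
          msum_zero p i (2*i + 3) (fun m hn1 hn2 hn3 => by
            obtain ⟨k, hk⟩ := hn3; refine ⟨by omega, by omega, by omega, by omega⟩)]
        iterate 4 rw [if_neg (by omega)]
        rw [if_pos (by omega)]
        iterate 12 rw [if_neg (by omega)]
        omega
      by_cases h3 : i = -2
      · refine ⟨-1, ?_⟩
        rw [Kh_apply,
          nsum_zero p i (-1) (fun n hn1 hn2 hn3 => by
            obtain ⟨k, hk⟩ := hn3; refine ⟨by omega, by omega, by omega, by omega⟩),
          msum_zero p i (-1) (fun m hn1 hn2 hn3 => by
            obtain ⟨k, hk⟩ := hn3; refine ⟨by omega, by omega, by omega, by omega⟩)]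
        iterate 4 rw [if_neg (by omega)]
        rw [if_pos (by omega)]
        iterate 8 rw [if_neg (by omega)]
        omega
      by_cases h4 : i = 0
      · refine ⟨1, ?_⟩
        rw [Kh_apply,
          nsum_zero p i 1 (fun n hn1 hn2 hn3 => by
            obtain ⟨k, hk⟩ := hn3; refine ⟨by omega, by omega, by omega, by omega⟩),
          msum_zero p i 1 (fun m hn1 hn2 hn3 => by
            obtain ⟨k, hk⟩ := hn3; refine ⟨by omega, by omega, by omega, by omega⟩)]
        iterate 7 rw [if_neg (by omega)]
        rw [if_pos (by omega)]
        iterate 5 rw [if_neg (by omega)]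
        omega
      by_cases h5 : i = 2
      · refine ⟨5, ?_⟩
        rw [Kh_apply,
          nsum_zero p i 5 (fun n hn1 hn2 hn3 => by
            obtain ⟨k, hk⟩ := hn3; refine ⟨by omega, by omega, by omega, by omega⟩),
          msum_zero p i 5 (fun m hn1 hn2 hn3 => by
            obtain ⟨k, hk⟩ := hn3; refine ⟨by omega, by omega, by omega, by omega⟩)]
        iterate 11 rw [if_neg (by omega)]
        rw [if_pos (by omega)]
        iterate 1 rw [if_neg (by omega)]
        omega
      · have h6 : 4 ≤ i := by omega
        refine ⟨2*i + 1, ?_⟩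
        rw [Kh_apply,
          nsum_zero p i (2*i + 1) (fun n hn1 hn2 hn3 => by
            obtain ⟨k, hk⟩ := hn3; refine ⟨by omega, by omega, by omega, by omega⟩),
          msum_single p i (2*i + 1) (i - 2) (by omega) (by omega) ⟨d - 1, by omega⟩
            (fun m hn1 hn2 hn3 hne => by
              obtain ⟨k, hk⟩ := hn3; refine ⟨by omega, by omega, by omega, by omega⟩)]
        iterate 15 rw [if_neg (by omega)]
        rw [if_pos (by omega)]
        iterate 1 rw [if_neg (by omega)]
        omega
    · obtain ⟨d, hd⟩ := ho
      by_cases h1 : i = 4 - p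
      · refine ⟨9 - 2*p, ?_⟩
        rw [Kh_apply,
          nsum_zero p i (9 - 2*p) (fun n hn1 hn2 hn3 => by
            obtain ⟨k, hk⟩ := hn3; refine ⟨by omega, by omega, by omega, by omega⟩),
          msum_zero p i (9 - 2*p) (fun m hn1 hn2 hn3 => by
            obtain ⟨k, hk⟩ := hn3; refine ⟨by omega, by omega, by omega, by omega⟩)]
        iterate 2 rw [if_neg (by omega)]
        rw [if_pos (by omega)]
        iterate 10 rw [if_neg (by omega)]
        omega
      by_cases h2 : i ≤ -3
      · have h6 : 6 - p ≤ i := by omega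
        refine ⟨2*i + 1, ?_⟩
        rw [Kh_apply,
          nsum_single p i (2*i + 1) (i + 1) (by omega) (by omega) ⟨d + 1, by omega⟩
            (fun n hn1 hn2 hn3 hne => by
              obtain ⟨k, hk⟩ := hn3; refine ⟨by omega, by omega, by omega, by omega⟩),
          msum_zero p i (2*i + 1) (fun m hn1 hn2 hn3 => by
            obtain ⟨k, hk⟩ := hn3; refine ⟨by omega, by omega, by omega, by omega⟩)]
        iterate 5 rw [if_neg (by omega)]
        rw [if_pos (by omega)]
        iterate 11 rw [if_neg (by omega)]
        omega
      by_cases h3 : i = -1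
      · refine ⟨-1, ?_⟩
        rw [Kh_apply,
          nsum_zero p i (-1) (fun n hn1 hn2 hn3 => by
            obtain ⟨k, hk⟩ := hn3; refine ⟨by omega, by omega, by omega, by omega⟩),
          msum_zero p i (-1) (fun m hn1 hn2 hn3 => by
            obtain ⟨k, hk⟩ := hn3; refine ⟨by omega, by omega, by omega, by omega⟩)]
        iterate 5 rw [if_neg (by omega)]
        rw [if_pos (by omega)]
        iterate 7 rw [if_neg (by omega)]
        omega
      by_cases h4 : i = 1
      · refine ⟨3, ?_⟩
        rw [Kh_apply,
          nsum_zero p i 3 (fun n hn1 hn2 hn3 => by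
            obtain ⟨k, hk⟩ := hn3; refine ⟨by omega, by omega, by omega, by omega⟩),
          msum_zero p i 3 (fun m hn1 hn2 hn3 => by
            obtain ⟨k, hk⟩ := hn3; refine ⟨by omega, by omega, by omega, by omega⟩)]
        iterate 9 rw [if_neg (by omega)]
        rw [if_pos (by omega)]
        iterate 3 rw [if_neg (by omega)]
        omega
      · have h6 : 3 ≤ i := by omega
        refine ⟨2*i + 3, ?_⟩
        rw [Kh_apply,
          nsum_zero p i (2*i + 3) (fun n hn1 hn2 hn3 => by
            obtain ⟨k, hk⟩ := hn3; refine ⟨by omega, by omega, by omega, by omega⟩),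
          msum_single p i (2*i + 3) (i - 1) (by omega) (by omega) ⟨d, by omega⟩
            (fun m hn1 hn2 hn3 hne => by
              obtain ⟨k, hk⟩ := hn3; refine ⟨by omega, by omega, by omega, by omega⟩)]
        iterate 14 rw [if_neg (by omega)]
        rw [if_pos (by omega)]
        iterate 2 rw [if_neg (by omega)]
        omega
end
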